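/- Given a graph H with threshold assignment τ', construct G by attaching, to each node v of H, ⌈d_H(v)/2⌉ disjoint copies of K_2 with both nodes of each copy adjacent to v; set τ=τ' on V(H) and τ=1 on the new nodes. Then the minimum size of a target set for (H,τ') in the progressive model equals the minimum size of a timed target set for (G,τ) in the non-progressive model. -/

import Mathlib

open Finset
open scoped Classical

variable {V : Type*}

noncomputable def Qseq (G : SimpleGraph V) [Fintype V] (τ : V → ℕ) (S : ℕ → Finset V) :
    ℕ → Finset V
  | 0 => ∅
  | i + 1 => Finset.univ.filter fun v =>
      τ v ≤ (G.neighborFinset v ∩ (S i ∪ Qseq G τ S i)).card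

def IsTTS (G : SimpleGraph V) [Fintype V] (τ : V → ℕ) (S : ℕ → Finset V) (k : ℕ) : Prop :=
  S k = ∅ ∧ Qseq G τ S k = Finset.univ

def ttsSize (S : ℕ → Finset V) (k : ℕ) : ℕ := ∑ i ∈ Finset.range (k + 1), (S i).card

noncomputable def strictMaj (G : SimpleGraph V) [Fintype V] (v : V) : ℕ := (G.degree v + 2) / 2

noncomputable def npStep (G : SimpleGraph V) [Fintype V] (τ : V → ℕ) (A : Finset V) : Finset V :=
  Finset.univ.filter fun v => τ v ≤ (G.neighborFinset v ∩ A).card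

def IsTS (G : SimpleGraph V) [Fintype V] (τ : V → ℕ) (S : Finset V) : Prop :=
  ∃ i : ℕ, (npStep G τ)^[i] S = Finset.univ

noncomputable def MTT (G : SimpleGraph V) [Fintype V] (τ : V → ℕ) : ℕ :=
  sInf {m | ∃ (S : ℕ → Finset V) (k : ℕ), IsTTS G τ S k ∧ ttsSize S k = m}

/-- One step of the progressive threshold model: positive nodes stay positive, and a node
becomes positive if at least `τ(v)` of its neighbors are positive. -/
noncomputable def pStep (H : SimpleGraph V) [Fintype V] (τ : V → ℕ) (A : Finset V) :
    Finset V :=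
  A ∪ Finset.univ.filter fun v => τ v ≤ (H.neighborFinset v ∩ A).card

/-- A target set in the progressive threshold model. -/
def IsPTS (H : SimpleGraph V) [Fintype V] (τ : V → ℕ) (S : Finset V) : Prop :=
  ∃ i : ℕ, (pStep H τ)^[i] S = Finset.univ

/-- Vertex type of the gadget graph: the vertices of `H` together with, for each `v`,
`⌈d(v)/2⌉` copies of `K_2` (a copy index below `⌈d(v)/2⌉` and a `Fin 2` component). -/
def gadgetV (H : SimpleGraph V) [Fintype V] : Type _ :=
  V ⊕ {p : V × Fin (H.maxDegree + 1) × Fin 2 // (p.2.1 : ℕ) < (H.degree p.1 + 1) / 2}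

noncomputable instance (H : SimpleGraph V) [Fintype V] : Fintype (gadgetV H) := by
  unfold gadgetV; infer_instance

/-- Adjacency of the gadget graph: `H`-edges between original vertices, each gadget vertex
is adjacent to the original vertex it is attached to, and the two vertices of each copy of
`K_2` are adjacent to each other. -/
def gadgetAdj (H : SimpleGraph V) [Fintype V] : gadgetV H → gadgetV H → Prop
  | Sum.inl a, Sum.inl b => H.Adj a b
  | Sum.inl a, Sum.inr p => a = p.1.1
  | Sum.inr p, Sum.inl a => a = p.1.1
  | Sum.inr p, Sum.inr q => p.1.1 = q.1.1 ∧ p.1.2.1 = q.1.2.1 ∧ p.1.2.2 ≠ q.1.2.2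

/-- The gadget graph `G` obtained from `H` by attaching `⌈d(v)/2⌉` copies of `K_2` to each
node `v`, with both nodes of each copy adjacent to `v`. -/
def gadgetGraph (H : SimpleGraph V) [Fintype V] : SimpleGraph (gadgetV H) where
  Adj := gadgetAdj H
  symm := by
    constructor
    intro a b h
    match a, b, h with
    | Sum.inl a, Sum.inl b, h => exact H.adj_symm h
    | Sum.inl a, Sum.inr p, h => exact h
    | Sum.inr p, Sum.inl a, h => exact h
    | Sum.inr p, Sum.inr q, h => exact ⟨h.1.symm, h.2.1.symm, h.2.2.symm⟩
  loopless := by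
    constructor
    intro a h
    match a, h with
    | Sum.inl a, h => exact H.irrefl h
    | Sum.inr p, h => exact h.2.2 rfl


/-- Use the classical decidable-equality instance on sum types, so that instances agree
definitionally with the classical ones used in the pinned definitions. -/
noncomputable instance (priority := 5000) sumDecEqClassical {α : Type*} {β : Type*} :
    DecidableEq (α ⊕ β) := fun a b => Classical.propDecidable _

section Aux

variable {W : Type*}

lemma Qseq_zero (G : SimpleGraph W) [Fintype W] (τ : W → ℕ) (S : ℕ → Finset W) :
    Qseq G τ S 0 = ∅ := by rw [Qseq]

lemma mem_Qseq_succ (G : SimpleGraph W) [Fintype W] (τ : W → ℕ) (S : ℕ → Finset W)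
    (i : ℕ) (x : W) :
    x ∈ Qseq G τ S (i + 1) ↔ τ x ≤ (G.neighborFinset x ∩ (S i ∪ Qseq G τ S i)).card := by
  rw [Qseq]; simp

lemma subset_pStep (H : SimpleGraph W) [Fintype W] (τ : W → ℕ) (A : Finset W) :
    A ⊆ pStep H τ A := Finset.subset_union_left

lemma pIter_subset (H : SimpleGraph W) [Fintype W] (τ : W → ℕ) (S : Finset W) (i : ℕ) :
    S ⊆ (pStep H τ)^[i] S := by
  induction i with
  | zero => simp
  | succ i ih =>
    rw [Function.iterate_succ_apply']
    exact ih.trans (subset_pStep H τ _)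

lemma pIter_succ_subset (H : SimpleGraph W) [Fintype W] (τ : W → ℕ) (S : Finset W) (i : ℕ) :
    (pStep H τ)^[i] S ⊆ (pStep H τ)^[i + 1] S := by
  rw [Function.iterate_succ_apply']
  exact subset_pStep H τ _

/-- Any finset containing all gadget vertices attached to `v` has at least `H.degree v`
elements. -/
lemma gadget_count [Fintype W] (H : SimpleGraph W) (v : W) (B : Finset (gadgetV H))
    (hB : ∀ p : {p : W × Fin (H.maxDegree + 1) × Fin 2 // (p.2.1 : ℕ) < (H.degree p.1 + 1) / 2},
      p.1.1 = v → (Sum.inr p : gadgetV H) ∈ B) :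
    H.degree v ≤ B.card := by
  set d := H.degree v with hd
  set m := (d + 1) / 2 with hm
  have hmle : ∀ j : Fin m, (j : ℕ) < H.maxDegree + 1 := by
    intro j
    have h1 := j.2
    have h2 := H.degree_le_maxDegree v
    omega
  let f : Fin m × Fin 2 → gadgetV H := fun x =>
    Sum.inr ⟨(v, ⟨x.1, hmle x.1⟩, x.2), x.1.2⟩
  have hsub : ∀ x ∈ (Finset.univ : Finset (Fin m × Fin 2)), f x ∈ B := fun x _ => hB _ rfl
  have hinj : Set.InjOn f (Finset.univ : Finset (Fin m × Fin 2)) := by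
    intro a _ b _ hab
    have h0 := Sum.inr_injective hab
    have h2 : ((a.1 : ℕ)) = (b.1 : ℕ) :=
      congrArg (fun z => ((z.1.2.1 : Fin (H.maxDegree + 1)) : ℕ)) h0
    have h3 : a.2 = b.2 := congrArg (fun z => z.1.2.2) h0
    exact Prod.ext (Fin.ext h2) h3
  have hcard := Finset.card_le_card_of_injOn f hsub hinj
  have hcu : (Finset.univ : Finset (Fin m × Fin 2)).card = m * 2 := by simp
  omega

end Aux

section Gadget

variable [Fintype V]

lemma forward (H : SimpleGraph V) (τ' : V → ℕ) (hτ' : ∀ v, τ' v ≤ H.degree v)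
    (S : Finset V) (hS : IsPTS H τ' S) :
    ∃ (T : ℕ → Finset (gadgetV H)) (k : ℕ),
      IsTTS (gadgetGraph H) (Sum.elim τ' fun _ => 1) T k ∧ ttsSize T k = S.card := by
  obtain ⟨t, ht⟩ := hS
  set T : ℕ → Finset (gadgetV H) := fun i => if i = 0 then S.image Sum.inl else ∅ with hT
  set Q : ℕ → Finset (gadgetV H) :=
    Qseq (gadgetGraph H) (Sum.elim τ' fun _ => 1) T with hQ
  -- L2: if `inl v` is positive or seeded, all gadgets of `v` are positive at the next step
  have L2 : ∀ (i : ℕ) (v : V), (Sum.inl v ∈ T i ∨ Sum.inl v ∈ Q i) →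
      ∀ p, p.1.1 = v → (Sum.inr p : gadgetV H) ∈ Q (i + 1) := by
    intro i v hv p hp
    rw [hQ]; refine (mem_Qseq_succ _ _ _ _ _).2 ?_
    refine Finset.card_pos.2 ⟨Sum.inl v, Finset.mem_inter.2 ⟨?_, ?_⟩⟩
    · refine (SimpleGraph.mem_neighborFinset _ _ _).2 ?_
      exact hp.symm
    · rcases hv with hv | hv
      · exact Finset.mem_union_left _ hv
      · exact Finset.mem_union_right _ (by rw [hQ] at hv; exact hv)
  -- L1: gadgets of `v` stay positive
  have L1 : ∀ (i : ℕ) (v : V), (∀ p, p.1.1 = v → (Sum.inr p : gadgetV H) ∈ Q i) →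
      ∀ p, p.1.1 = v → (Sum.inr p : gadgetV H) ∈ Q (i + 1) := by
    intro i v h p hp
    have hqQ : (Sum.inr (⟨(p.1.1, p.1.2.1, p.1.2.2 + 1), p.2⟩ :
        {p : V × Fin (H.maxDegree + 1) × Fin 2 // (p.2.1 : ℕ) < (H.degree p.1 + 1) / 2}) :
        gadgetV H) ∈ Q i := h _ hp
    rw [hQ]; refine (mem_Qseq_succ _ _ _ _ _).2 ?_
    refine Finset.card_pos.2 ⟨_, Finset.mem_inter.2 ⟨?_, Finset.mem_union_right _
      (by rw [hQ] at hqQ; exact hqQ)⟩⟩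
    refine (SimpleGraph.mem_neighborFinset _ _ _).2 ?_
    refine ⟨rfl, rfl, ?_⟩
    have h2 : ∀ b : Fin 2, b ≠ b + 1 := by decide
    exact h2 _
  -- persistence upwards
  have Lup : ∀ (v : V) (m : ℕ), (∀ p, p.1.1 = v → (Sum.inr p : gadgetV H) ∈ Q m) →
      ∀ i, m ≤ i → ∀ p, p.1.1 = v → (Sum.inr p : gadgetV H) ∈ Q i := by
    intro v m hm i hi
    induction i, hi using Nat.le_induction with
    | base => exact hm
    | succ i hi ih => exact L1 i v ih
  -- L3: if all gadgets of `v` are positive then `v` is positive at the next step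
  have L3 : ∀ (i : ℕ) (v : V), (∀ p, p.1.1 = v → (Sum.inr p : gadgetV H) ∈ Q i) →
      (Sum.inl v : gadgetV H) ∈ Q (i + 1) := by
    intro i v h
    rw [hQ]; refine (mem_Qseq_succ _ _ _ _ _).2 ?_
    refine le_trans (hτ' v) (gadget_count H v _ ?_)
    intro p hp
    refine Finset.mem_inter.2 ⟨?_, Finset.mem_union_right _ (by rw [hQ] at h; exact h p hp)⟩
    refine (SimpleGraph.mem_neighborFinset _ _ _).2 ?_
    exact hp.symm
  -- main induction along the progressive process
  have main : ∀ (j : ℕ) (v : V), v ∈ (pStep H τ')^[j] S →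
      ∀ i, 3 * j + 1 ≤ i → ∀ p, p.1.1 = v → (Sum.inr p : gadgetV H) ∈ Q i := by
    intro j
    induction j with
    | zero =>
      intro v hv i hi p hp
      have hvS : v ∈ S := by simpa using hv
      have hT0 : T 0 = S.image (Sum.inl : V → gadgetV H) := by rw [hT]; exact if_pos rfl
      have h0 : Sum.inl v ∈ T 0 ∨ (Sum.inl v : gadgetV H) ∈ Q 0 := by
        left
        rw [hT0]
        exact Finset.mem_image_of_mem _ hvS
      exact Lup v 1 (fun p hp => L2 0 v h0 p hp) i (by omega) p hp
    | succ j ih =>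
      intro v hv i hi p hp
      rw [Function.iterate_succ_apply'] at hv
      rcases Finset.mem_union.1 hv with hv | hv
      · exact Lup v (3 * j + 1) (fun p hp => ih v hv (3 * j + 1) le_rfl p hp) i (by omega) p hp
      · simp only [Finset.mem_filter, Finset.mem_univ, true_and] at hv
        have hu : ∀ u ∈ H.neighborFinset v ∩ (pStep H τ')^[j] S,
            ∀ i', 3 * j + 2 ≤ i' → (Sum.inl u : gadgetV H) ∈ Q i' := by
          intro u hu i' hi'
          obtain ⟨i'', rfl⟩ : ∃ i'', i' = i'' + 1 := ⟨i' - 1, by omega⟩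
          exact L3 i'' u (fun p hp => ih u (Finset.mem_inter.1 hu).2 i'' (by omega) p hp)
        have hv' : ∀ i', 3 * j + 3 ≤ i' → (Sum.inl v : gadgetV H) ∈ Q i' := by
          intro i' hi'
          obtain ⟨i'', rfl⟩ : ∃ i'', i' = i'' + 1 := ⟨i' - 1, by omega⟩
          rw [hQ]; refine (mem_Qseq_succ _ _ _ _ _).2 ?_
          refine le_trans hv (Finset.card_le_card_of_injOn Sum.inl ?_ ?_)
          · intro u hu'
            refine Finset.mem_inter.2 ⟨?_, Finset.mem_union_right _ ?_⟩
            · refine (SimpleGraph.mem_neighborFinset _ _ _).2 ?_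
              exact (SimpleGraph.mem_neighborFinset H v u).1 (Finset.mem_inter.1 hu').1
            · have := hu u hu' i'' (by omega)
              rw [hQ] at this
              exact this
          · intro a _ b _ hab
            exact Sum.inl_injective hab
        have hg : ∀ p, p.1.1 = v → (Sum.inr p : gadgetV H) ∈ Q (3 * j + 4) :=
          fun p hp => L2 (3 * j + 3) v (Or.inr (hv' _ le_rfl)) p hp
        exact Lup v (3 * j + 4) hg i (by omega) p hp
  refine ⟨T, 3 * t + 3, ⟨?_, ?_⟩, ?_⟩
  · rw [hT]; simp
  · rw [← hQ]
    apply Finset.eq_univ_iff_forall.2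
    intro x
    cases x with
    | inl v =>
      have hg := main t v (by rw [ht]; exact Finset.mem_univ v)
      exact L3 (3 * t + 2) v (fun p hp => hg (3 * t + 2) (by omega) p hp)
    | inr p =>
      exact main t p.1.1 (by rw [ht]; exact Finset.mem_univ _) (3 * t + 3) (by omega) p rfl
  · unfold ttsSize
    rw [Finset.sum_eq_single_of_mem 0 (Finset.mem_range.2 (by omega))
      (fun i _ hne => by rw [hT]; simp [hne])]
    rw [hT]
    exact Finset.card_image_of_injective S Sum.inl_injective


lemma backward (H : SimpleGraph V) (τ' : V → ℕ)
    (T : ℕ → Finset (gadgetV H)) (k : ℕ)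
    (h : IsTTS (gadgetGraph H) (Sum.elim τ' fun _ => 1) T k) :
    ∃ S : Finset V, IsPTS H τ' S ∧ S.card ≤ ttsSize T k := by
  obtain ⟨hTk, hQk⟩ := h
  set π : gadgetV H → V := Sum.elim id (fun p => p.1.1) with hπ
  set S : Finset V := (Finset.range (k + 1)).biUnion (fun i => (T i).image π) with hSdef
  set Q := Qseq (gadgetGraph H) (Sum.elim τ' fun _ => 1) T with hQ
  set P : ℕ → Finset V := fun i => (pStep H τ')^[i] S with hP
  have hPs : ∀ i, P i ⊆ P (i + 1) := fun i => pIter_succ_subset H τ' S i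
  have hSP : ∀ i, S ⊆ P i := fun i => pIter_subset H τ' S i
  have hTsub : ∀ i, i ≤ k → ∀ x ∈ T i, π x ∈ S := by
    intro i hi x hx
    rw [hSdef]
    exact Finset.mem_biUnion.2 ⟨i, Finset.mem_range.2 (by omega), Finset.mem_image_of_mem _ hx⟩
  have inv : ∀ i, i ≤ k → ∀ x, (x ∈ T i ∨ x ∈ Q i) → π x ∈ P i := by
    intro i
    induction i with
    | zero =>
      intro _ x hx
      rcases hx with hx | hx
      · exact hSP 0 (hTsub 0 (by omega) x hx)
      · have hx' : x ∈ Qseq (gadgetGraph H) (Sum.elim τ' fun _ => 1) T 0 := hx; exact (Finset.eq_empty_iff_forall_notMem.1 (Qseq_zero _ _ _) x hx').elim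
    | succ i ih =>
      intro hik x hx
      have hik' : i ≤ k := by omega
      rcases hx with hx | hx
      · exact hSP (i + 1) (hTsub _ hik x hx)
      · replace hx := (mem_Qseq_succ _ _ _ _ _).1 hx
        cases x with
        | inl w =>
          show w ∈ P (i + 1)
          by_cases hg : ∃ p : {p : V × Fin (H.maxDegree + 1) × Fin 2 //
              (p.2.1 : ℕ) < (H.degree p.1 + 1) / 2}, p.1.1 = w ∧
              ((Sum.inr p : gadgetV H) ∈ T i ∨ (Sum.inr p : gadgetV H) ∈ Q i)
          · obtain ⟨p, hp1, hp2⟩ := hg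
            have hw := ih hik' (Sum.inr p) hp2
            have hw' : w ∈ P i := by rw [← hp1]; exact hw
            exact hPs i hw'
          · push_neg at hg
            have hinlify : ∀ y, y ∈ (gadgetGraph H).neighborFinset (Sum.inl w) →
                (y ∈ T i ∨ y ∈ Q i) → ∃ u, y = Sum.inl u ∧ H.Adj w u := by
              intro y hy1 hy2
              cases y with
              | inl u =>
                have hadj := (SimpleGraph.mem_neighborFinset _ _ _).1 hy1
                exact ⟨u, rfl, hadj⟩
              | inr p =>
                exfalso
                have hadj : w = p.1.1 := (SimpleGraph.mem_neighborFinset _ _ _).1 hy1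
                rcases hy2 with h' | h'
                · exact (hg p hadj.symm).1 h'
                · exact (hg p hadj.symm).2 h'
            rw [hP]
            simp only
            rw [Function.iterate_succ_apply']
            refine Finset.mem_union_right _ (Finset.mem_filter.2 ⟨Finset.mem_univ _, ?_⟩)
            refine le_trans hx (Finset.card_le_card_of_injOn π ?_ ?_)
            · intro y hy
              have hy1 := (Finset.mem_inter.1 hy).1
              have hy2 : y ∈ T i ∨ y ∈ Q i := by
                rcases Finset.mem_union.1 (Finset.mem_inter.1 hy).2 with h' | h'
                · exact Or.inl h'
                · exact Or.inr (by rw [hQ]; exact h')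
              obtain ⟨u, rfl, hadj⟩ := hinlify y hy1 hy2
              refine Finset.mem_inter.2 ⟨(H.mem_neighborFinset w u).2 hadj, ?_⟩
              exact ih hik' (Sum.inl u) hy2
            · intro a ha b hb hab
              have ha' := Finset.mem_coe.1 ha
              have hb' := Finset.mem_coe.1 hb
              have ha2 : a ∈ T i ∨ a ∈ Q i := by
                rcases Finset.mem_union.1 (Finset.mem_inter.1 ha').2 with h' | h'
                · exact Or.inl h'
                · exact Or.inr (by rw [hQ]; exact h')
              have hb2 : b ∈ T i ∨ b ∈ Q i := by
                rcases Finset.mem_union.1 (Finset.mem_inter.1 hb').2 with h' | h'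
                · exact Or.inl h'
                · exact Or.inr (by rw [hQ]; exact h')
              obtain ⟨u, rfl, _⟩ := hinlify a (Finset.mem_inter.1 ha').1 ha2
              obtain ⟨u', rfl, _⟩ := hinlify b (Finset.mem_inter.1 hb').1 hb2
              exact congrArg Sum.inl hab
        | inr p =>
          show p.1.1 ∈ P (i + 1)
          obtain ⟨y, hy⟩ := Finset.card_pos.1 (lt_of_lt_of_le Nat.zero_lt_one hx)
          have hy1 := (Finset.mem_inter.1 hy).1
          have hyor : y ∈ T i ∨ y ∈ Q i := by
            rcases Finset.mem_union.1 (Finset.mem_inter.1 hy).2 with h' | h'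
            · exact Or.inl h'
            · exact Or.inr (by rw [hQ]; exact h')
          have hπy : π y = p.1.1 := by
            cases y with
            | inl a => exact ((SimpleGraph.mem_neighborFinset _ _ _).1 hy1 : a = p.1.1)
            | inr q =>
              have hadj : p.1.1 = q.1.1 ∧ p.1.2.1 = q.1.2.1 ∧ p.1.2.2 ≠ q.1.2.2 :=
                (SimpleGraph.mem_neighborFinset _ _ _).1 hy1
              exact hadj.1.symm
          have hPy := ih hik' y hyor
          rw [hπy] at hPy
          exact hPs i hPy
  refine ⟨S, ⟨k, ?_⟩, ?_⟩
  · apply Finset.eq_univ_iff_forall.2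
    intro w
    have hwQ : (Sum.inl w : gadgetV H) ∈ Q k := by rw [hQk]; exact Finset.mem_univ _
    exact inv k le_rfl (Sum.inl w) (Or.inr hwQ)
  · rw [hSdef]
    calc ((Finset.range (k + 1)).biUnion fun i => (T i).image π).card
        ≤ ∑ i ∈ Finset.range (k + 1), ((T i).image π).card := Finset.card_biUnion_le
      _ ≤ ∑ i ∈ Finset.range (k + 1), (T i).card :=
          Finset.sum_le_sum fun i _ => Finset.card_image_le
      _ = ttsSize T k := rfl

end Gadget

/-- reduction in Theorem 6: For a graph `H` with threshold assignment
`τ'`, the minimum size of a target set for `(H, τ')` in the progressive model equals the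
minimum size of a timed target set in the non-progressive model for the gadget graph `G`
(thresholds: `τ'` on `V(H)` and `1` on the new nodes). -/
theorem stmt16 [Fintype V] (H : SimpleGraph V) (τ' : V → ℕ)
    (hτ' : ∀ v, τ' v ≤ H.degree v) :
    sInf {m | ∃ S : Finset V, IsPTS H τ' S ∧ S.card = m} =
      MTT (gadgetGraph H) (Sum.elim τ' fun _ => 1) := by
  unfold MTT
  apply le_antisymm
  · refine le_csInf ?_ ?_
    · obtain ⟨T, k, h1, h2⟩ := forward H τ' hτ' Finset.univ ⟨0, rfl⟩
      exact ⟨_, T, k, h1, rfl⟩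
    · rintro b ⟨T, k, hT, rfl⟩
      obtain ⟨S, hS, hle⟩ := backward H τ' T k hT
      exact le_trans (Nat.sInf_le ⟨S, hS, rfl⟩) hle
  · refine le_csInf ⟨_, Finset.univ, ⟨0, rfl⟩, rfl⟩ ?_
    rintro a ⟨S, hS, rfl⟩
    obtain ⟨T, k, hT, hsz⟩ := forward H τ' hτ' S hS
    exact Nat.sInf_le ⟨T, k, hT, hsz⟩
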